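/- For p ∈ (0, 1/2), the function φ_p : [0,1] → [0,1] defined by φ_p(x) = h₂( h₂⁻¹(x) ∗ p ) is convex and non-decreasing, where h₂⁻¹ maps [0,1] to [0,1/2]. -/

import Mathlib

/-- Binary convolution `a ∗ b = a(1-b) + b(1-a)`. -/
noncomputable def bconv (a b : ℝ) : ℝ := a * (1 - b) + b * (1 - a)

/-- Binary entropy (base 2), with the convention `0 · log 0 = 0`. -/
noncomputable def h2 (x : ℝ) : ℝ := -x * Real.logb 2 x - (1 - x) * Real.logb 2 (1 - x)

/-- Inverse of binary entropy, mapping `[0,1]` to `[0,1/2]`. -/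
noncomputable def h2inv (y : ℝ) : ℝ :=
  sSup {r : ℝ | r ∈ Set.Icc (0:ℝ) (1/2) ∧ h2 r ≤ y}

namespace Stmt17Aux

open Real Set Filter Topology

lemma h2_eq (x : ℝ) : h2 x = Real.binEntropy x / Real.log 2 := by
  unfold h2 Real.binEntropy Real.logb
  rw [Real.log_inv, Real.log_inv]
  ring

lemma log2_pos : (0:ℝ) < Real.log 2 := Real.log_pos (by norm_num)

lemma continuous_h2 : Continuous h2 := by
  have : h2 = fun x => Real.binEntropy x / Real.log 2 := funext h2_eq
  rw [this]
  exact Real.binEntropy_continuous.div_const _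

lemma h2_zero : h2 0 = 0 := by rw [h2_eq]; simp

lemma h2_half : h2 (1/2) = 1 := by
  rw [h2_eq]
  have : (1:ℝ)/2 = 2⁻¹ := by norm_num
  rw [this, Real.binEntropy_two_inv, div_self log2_pos.ne']

lemma h2_strictMono : StrictMonoOn h2 (Icc (0:ℝ) (1/2)) := by
  intro a ha b hb hab
  rw [h2_eq, h2_eq]
  have h2inv' : (1:ℝ)/2 = 2⁻¹ := by norm_num
  rw [div_lt_div_iff_of_pos_right log2_pos]
  have e : (1:ℝ)/2 = 2⁻¹ := by norm_num
  exact Real.binEntropy_strictMonoOn (by rwa [← e]) (by rwa [← e]) hab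

lemma h2_nonneg {x : ℝ} (h0 : 0 ≤ x) (h1 : x ≤ 1) : 0 ≤ h2 x := by
  rw [h2_eq]
  exact div_nonneg (Real.binEntropy_nonneg h0 h1) log2_pos.le

lemma h2_le_one (x : ℝ) : h2 x ≤ 1 := by
  rw [h2_eq, div_le_one log2_pos]
  exact Real.binEntropy_le_log_two

lemma hasDerivAt_h2 {x : ℝ} (h0 : x ≠ 0) (h1 : x ≠ 1) :
    HasDerivAt h2 ((Real.log (1 - x) - Real.log x) / Real.log 2) x := by
  have : h2 = fun x => Real.binEntropy x / Real.log 2 := funext h2_eq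
  rw [this]
  exact (Real.hasDerivAt_binEntropy h0 h1).div_const _

/-! ### Properties of `h2inv` -/

lemma bddAbove_S (y : ℝ) : BddAbove {r : ℝ | r ∈ Icc (0:ℝ) (1/2) ∧ h2 r ≤ y} :=
  ⟨1/2, fun _ hr => hr.1.2⟩

lemma zero_mem_S {y : ℝ} (hy : 0 ≤ y) : (0:ℝ) ∈ {r : ℝ | r ∈ Icc (0:ℝ) (1/2) ∧ h2 r ≤ y} :=
  ⟨⟨le_refl _, by norm_num⟩, by rw [h2_zero]; exact hy⟩

lemma isClosed_S (y : ℝ) : IsClosed {r : ℝ | r ∈ Icc (0:ℝ) (1/2) ∧ h2 r ≤ y} := by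
  have : {r : ℝ | r ∈ Icc (0:ℝ) (1/2) ∧ h2 r ≤ y}
      = Icc (0:ℝ) (1/2) ∩ h2 ⁻¹' (Iic y) := rfl
  rw [this]
  exact isClosed_Icc.inter (isClosed_Iic.preimage continuous_h2)

lemma h2inv_mem {y : ℝ} (hy : 0 ≤ y) :
    h2inv y ∈ Icc (0:ℝ) (1/2) ∧ h2 (h2inv y) ≤ y :=
  (isClosed_S y).csSup_mem ⟨0, zero_mem_S hy⟩ (bddAbove_S y)

lemma h2_h2inv {y : ℝ} (hy : y ∈ Icc (0:ℝ) 1) : h2 (h2inv y) = y := by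
  obtain ⟨⟨ht0, ht2⟩, hle⟩ := h2inv_mem hy.1
  refine le_antisymm hle (le_of_not_gt fun h => ?_)
  have ht2' : h2inv y < 1/2 := by
    rcases lt_or_eq_of_le ht2 with h' | h'
    · exact h'
    · rw [h', h2_half] at h; exact absurd hy.2 (not_le.2 h)
  have hU : {s : ℝ | h2 s < y} ∩ Iio (1/2) ∈ 𝓝 (h2inv y) :=
    Filter.inter_mem
      (((isOpen_lt continuous_h2 continuous_const).mem_nhds h))
      (Iio_mem_nhds ht2')
  have : ∀ᶠ s in 𝓝[>] (h2inv y), (h2 s < y ∧ s < 1/2) ∧ h2inv y < s := by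
    filter_upwards [mem_nhdsWithin_of_mem_nhds hU, self_mem_nhdsWithin] with s hs hs'
    exact ⟨hs, hs'⟩
  obtain ⟨s, ⟨hs1, hs2⟩, hs3⟩ := this.exists
  have : s ≤ h2inv y :=
    le_csSup (bddAbove_S y) ⟨⟨ht0.trans hs3.le, hs2.le⟩, hs1.le⟩
  linarith

lemma h2inv_h2 {t : ℝ} (ht : t ∈ Icc (0:ℝ) (1/2)) : h2inv (h2 t) = t := by
  have ht1 : t ≤ 1 := ht.2.trans (by norm_num)
  have hy : h2 t ∈ Icc (0:ℝ) 1 := ⟨h2_nonneg ht.1 ht1, h2_le_one t⟩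
  exact h2_strictMono.injOn (h2inv_mem hy.1).1 ht (h2_h2inv hy)

lemma h2inv_zero : h2inv 0 = 0 := by
  have := h2inv_h2 (t := 0) ⟨le_refl _, by norm_num⟩
  rwa [h2_zero] at this

lemma h2inv_one : h2inv 1 = 1/2 := by
  have := h2inv_h2 (t := 1/2) ⟨by norm_num, le_refl _⟩
  rwa [h2_half] at this

lemma h2inv_monotone : MonotoneOn h2inv (Icc (0:ℝ) 1) := by
  intro a ha b hb hab
  exact csSup_le_csSup (bddAbove_S b) ⟨0, zero_mem_S ha.1⟩
    (fun r hr => ⟨hr.1, hr.2.trans hab⟩)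

lemma h2inv_strictMono : StrictMonoOn h2inv (Icc (0:ℝ) 1) := by
  intro a ha b hb hab
  refine lt_of_le_of_ne (h2inv_monotone ha hb hab.le) fun he => ?_
  have : a = b := by rw [← h2_h2inv ha, ← h2_h2inv hb, he]
  exact absurd this hab.ne

lemma h2inv_image : h2inv '' Icc (0:ℝ) 1 = Icc (0:ℝ) (1/2) := by
  apply Subset.antisymm
  · rintro _ ⟨y, hy, rfl⟩
    exact (h2inv_mem hy.1).1
  · intro t ht
    exact ⟨h2 t, ⟨h2_nonneg ht.1 (ht.2.trans (by norm_num)), h2_le_one t⟩, h2inv_h2 ht⟩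

lemma h2inv_mem_Ioo {y : ℝ} (hy : y ∈ Ioo (0:ℝ) 1) : h2inv y ∈ Ioo (0:ℝ) (1/2) := by
  have hm := (h2inv_mem hy.1.le).1
  have hiv := h2_h2inv (Ioo_subset_Icc_self hy)
  constructor
  · rcases lt_or_eq_of_le hm.1 with h | h
    · exact h
    · exfalso; rw [← h, h2_zero] at hiv; exact absurd hiv.symm hy.1.ne'
  · rcases lt_or_eq_of_le hm.2 with h | h
    · exact h
    · exfalso; rw [h, h2_half] at hiv; exact absurd hiv.symm hy.2.ne

lemma continuousOn_h2inv : ContinuousOn h2inv (Icc (0:ℝ) 1) := by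
  intro x hx
  rcases eq_or_lt_of_le hx.1 with h0 | h0
  · subst h0
    have h := h2inv_strictMono.continuousWithinAt_right_of_image_mem_nhdsWithin
      (a := (0:ℝ)) (Icc_mem_nhdsGE_of_mem ⟨le_refl _, one_pos⟩)
      (by rw [h2inv_image, h2inv_zero]
          exact Icc_mem_nhdsGE_of_mem ⟨le_refl _, by norm_num⟩)
    exact h.mono Icc_subset_Ici_self
  rcases eq_or_lt_of_le hx.2 with h1 | h1
  · subst h1
    have h := h2inv_strictMono.continuousWithinAt_left_of_image_mem_nhdsWithin
      (a := (1:ℝ)) (Icc_mem_nhdsLE_of_mem ⟨one_pos, le_refl _⟩)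
      (by rw [h2inv_image, h2inv_one]
          exact Icc_mem_nhdsLE_of_mem ⟨by norm_num, le_refl _⟩)
    exact h.mono Icc_subset_Iic_self
  · have h := h2inv_strictMono.continuousAt_of_image_mem_nhds
      (Icc_mem_nhds h0 h1)
      (by rw [h2inv_image]
          have := h2inv_mem_Ioo ⟨h0, h1⟩
          exact Icc_mem_nhds this.1 this.2)
    exact h.continuousWithinAt

lemma hasDerivAt_h2inv {y : ℝ} (hy : y ∈ Ioo (0:ℝ) 1) :
    HasDerivAt h2inv
      (((Real.log (1 - h2inv y) - Real.log (h2inv y)) / Real.log 2)⁻¹) y := by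
  have htI : h2inv y ∈ Ioo (0:ℝ) (1/2) := h2inv_mem_Ioo hy
  have ht1 : h2inv y ≠ 1 := by have := htI.2; intro h; rw [h] at this; norm_num at this
  have hf : HasDerivAt h2 ((Real.log (1 - h2inv y) - Real.log (h2inv y)) / Real.log 2)
      (h2inv y) := hasDerivAt_h2 htI.1.ne' ht1
  have hpos : 0 < Real.log (1 - h2inv y) - Real.log (h2inv y) := by
    have := Real.log_lt_log htI.1 (by linarith [htI.2] : h2inv y < 1 - h2inv y)
    linarith
  refine HasDerivAt.of_local_left_inverse
    (continuousOn_h2inv.continuousAt (Icc_mem_nhds hy.1 hy.2)) hf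
    (ne_of_gt (div_pos hpos log2_pos)) ?_
  filter_upwards [Ioo_mem_nhds hy.1 hy.2] with z hz
  exact h2_h2inv (Ioo_subset_Icc_self hz)

/-! ### The key inequality -/

/-- `L t = log((1-t)/t)`, the derivative of natural-log binary entropy. -/
noncomputable def Lf (t : ℝ) : ℝ := Real.log (1 - t) - Real.log t

/-- `F t = t (1-t) L t`. -/
noncomputable def Ff (t : ℝ) : ℝ := t * (1 - t) * Lf t

/-- `G t = F'(t) = (1 - 2t) L t - 1`. -/
noncomputable def Gf (t : ℝ) : ℝ := (1 - 2*t) * Lf t - 1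

lemma Lf_pos {t : ℝ} (h0 : 0 < t) (h2 : t < 1/2) : 0 < Lf t := by
  have := Real.log_lt_log h0 (by linarith : t < 1 - t)
  unfold Lf; linarith

lemma Lf_nonneg {t : ℝ} (h0 : 0 < t) (h2 : t ≤ 1/2) : 0 ≤ Lf t := by
  have := Real.log_le_log h0 (by linarith : t ≤ 1 - t)
  unfold Lf; linarith

lemma hasDerivAt_Lf {t : ℝ} (h0 : 0 < t) (h1 : t < 1) :
    HasDerivAt Lf (-(1/(1-t)) - 1/t) t := by
  have h1' : (1:ℝ) - t ≠ 0 := by linarith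
  have a : HasDerivAt (fun s : ℝ => Real.log (1 - s)) (-(1/(1-t))) t := by
    have inner : HasDerivAt (fun s : ℝ => 1 - s) (-1) t := (hasDerivAt_id t).const_sub 1
    have := (Real.hasDerivAt_log h1').comp t inner
    rw [show -(1/(1-t)) = (1-t)⁻¹ * -1 by ring]
    exact this
  have b : HasDerivAt Real.log (1/t) t := by
    simpa [one_div] using Real.hasDerivAt_log h0.ne'
  exact a.sub b

lemma continuousAt_Lf {t : ℝ} (h0 : 0 < t) (h1 : t < 1) : ContinuousAt Lf t :=
  (hasDerivAt_Lf h0 h1).continuousAt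

lemma hasDerivAt_Ff {t : ℝ} (h0 : 0 < t) (h1 : t < 1) :
    HasDerivAt Ff (Gf t) t := by
  have hq : HasDerivAt (fun s : ℝ => s * (1 - s)) (1 * (1 - t) + t * (-1)) t :=
    (hasDerivAt_id t).mul ((hasDerivAt_id t).const_sub 1)
  have := hq.mul (hasDerivAt_Lf h0 h1)
  have heq : (1 * (1 - t) + t * (-1)) * Lf t + t * (1 - t) * (-(1/(1-t)) - 1/t)
      = Gf t := by
    unfold Gf
    have h1' : (1:ℝ) - t ≠ 0 := by linarith
    field_simp
    ring
  rw [heq] at this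
  exact this

lemma hasDerivAt_Gf {t : ℝ} (h0 : 0 < t) (h1 : t < 1) :
    HasDerivAt Gf (-2 * Lf t + (1 - 2*t) * (-(1/(1-t)) - 1/t)) t := by
  have hq : HasDerivAt (fun s : ℝ => 1 - 2*s) (-2) t := by
    simpa using ((hasDerivAt_id t).const_mul 2).const_sub 1
  have := (hq.mul (hasDerivAt_Lf h0 h1)).sub_const 1
  exact this

lemma Gf_antitone : AntitoneOn Gf (Ioc (0:ℝ) (1/2)) := by
  have hint : interior (Ioc (0:ℝ) (1/2)) = Ioo (0:ℝ) (1/2) := interior_Ioc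
  apply antitoneOn_of_deriv_nonpos (convex_Ioc _ _)
  · intro s hs
    exact ((hasDerivAt_Gf hs.1 (by linarith [hs.2] : s < 1)).continuousAt).continuousWithinAt
  · rw [hint]
    intro s hs
    exact ((hasDerivAt_Gf hs.1 (by linarith [hs.2] : s < 1)).differentiableAt).differentiableWithinAt
  · rw [hint]
    intro s hs
    rw [(hasDerivAt_Gf hs.1 (by linarith [hs.2] : s < 1)).deriv]
    have hL : 0 < Lf s := Lf_pos hs.1 hs.2
    have hs1 : 0 < 1 - s := by linarith [hs.2]
    have h1 : (1 - 2*s) * (-(1/(1-s)) - 1/s) ≤ 0 := by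
      apply mul_nonpos_of_nonneg_of_nonpos
      · linarith [hs.2]
      · have a : 0 < 1/(1-s) := one_div_pos.mpr hs1
        have b : 0 < 1/s := one_div_pos.mpr hs.1
        linarith
    linarith

lemma key_ineq {p t : ℝ} (hp : p ∈ Ioo (0:ℝ) (1/2)) (ht : t ∈ Ioo (0:ℝ) (1/2)) :
    (1 - 2*p) * Ff t ≤ Ff (p + (1 - 2*p) * t) := by
  obtain ⟨hp0, hp2⟩ := hp
  obtain ⟨ht0, ht2⟩ := ht
  have hp' : 0 < 1 - 2*p := by linarith
  set u : ℝ → ℝ := fun s => Ff (p + (1 - 2*p) * s) - (1 - 2*p) * Ff s with hu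
  -- facts about the map s ↦ p + (1-2p) s on [t, 1/2]
  have hG : ∀ s : ℝ, t ≤ s → s ≤ 1/2 →
      0 < p + (1 - 2*p) * s ∧ p + (1 - 2*p) * s ≤ 1/2 ∧ s ≤ p + (1 - 2*p) * s := by
    intro s hs1 hs2
    refine ⟨by nlinarith, by nlinarith, by nlinarith⟩
  have hder : ∀ s : ℝ, t ≤ s → s < 1/2 →
      HasDerivAt u (Gf (p + (1 - 2*p) * s) * (1 - 2*p) - (1 - 2*p) * Gf s) s := by
    intro s hs1 hs2
    obtain ⟨hg0, hg2, _⟩ := hG s hs1 hs2.le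
    have hinner : HasDerivAt (fun s : ℝ => p + (1 - 2*p) * s) (1 - 2*p) s := by
      simpa using ((hasDerivAt_id s).const_mul (1 - 2*p)).const_add p
    have houter := (hasDerivAt_Ff hg0 (by linarith : p + (1 - 2*p) * s < 1)).comp s hinner
    have hFs := (hasDerivAt_Ff (by linarith : (0:ℝ) < s)
      (by linarith : s < 1)).const_mul (1 - 2*p)
    exact houter.sub hFs
  have hanti : AntitoneOn u (Icc t (1/2)) := by
    have hint : interior (Icc t (1/2)) = Ioo t (1/2) := interior_Icc
    apply antitoneOn_of_deriv_nonpos (convex_Icc _ _)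
    · intro s hs
      rcases lt_or_eq_of_le hs.2 with h | h
      · exact ((hder s hs.1 h).continuousAt).continuousWithinAt
      · -- s = 1/2 : still continuity from derivative at 1/2? need s < 1/2 only for t ≤ s;
        subst h
        obtain ⟨hg0, hg2, _⟩ := hG _ hs.1 le_rfl
        have hinner : HasDerivAt (fun s : ℝ => p + (1 - 2*p) * s) (1 - 2*p) (1/2 : ℝ) := by
          simpa using ((hasDerivAt_id (1/2 : ℝ)).const_mul (1 - 2*p)).const_add p
        have houter := (hasDerivAt_Ff hg0 (by linarith)).comp (1/2 : ℝ) hinner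
        have hFs := (hasDerivAt_Ff (by linarith : (0:ℝ) < 1/2)
          (by linarith : (1:ℝ)/2 < 1)).const_mul (1 - 2*p)
        exact ((houter.sub hFs).continuousAt).continuousWithinAt
    · rw [hint]
      intro s hs
      exact ((hder s hs.1.le hs.2).differentiableAt).differentiableWithinAt
    · rw [hint]
      intro s hs
      rw [(hder s hs.1.le hs.2).deriv]
      obtain ⟨hg0, hg2, hsg⟩ := hG s hs.1.le hs.2.le
      have hGfle : Gf (p + (1 - 2*p) * s) ≤ Gf s := by
        apply Gf_antitone ⟨by linarith [ht0, hs.1], hs.2.le⟩ ⟨hg0, hg2⟩ hsg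
      nlinarith
  have h12 : u (1/2) ≤ u t :=
    hanti ⟨le_refl _, ht2.le⟩ ⟨ht2.le, le_refl _⟩ ht2.le
  have hval : u (1/2) = 0 := by
    have hpt : p + (1 - 2*p) * (1/2 : ℝ) = 1/2 := by ring
    have hF12 : Ff (1/2 : ℝ) = 0 := by
      unfold Ff Lf
      norm_num
    rw [hu]
    simp only [hpt, hF12]
    ring
  have : 0 ≤ u t := by rw [← hval]; exact h12
  rw [hu] at this
  simpa using this

/-! ### The derivative ratio `chi` and its monotonicity -/

/-- `chi p t = (1-2p) L(p + (1-2p)t) / L(t)`, the derivative of `φ_p` read through `h2inv`. -/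
noncomputable def chi (p t : ℝ) : ℝ := (1 - 2*p) * Lf (p + (1 - 2*p) * t) / Lf t

lemma gmap {p t : ℝ} (hp : p ∈ Ioo (0:ℝ) (1/2)) (ht0 : 0 < t) (ht2 : t ≤ 1/2) :
    0 < p + (1 - 2*p) * t ∧ p + (1 - 2*p) * t ≤ 1/2 := by
  obtain ⟨hp0, hp2⟩ := hp
  constructor <;> nlinarith

lemma hasDerivAt_chi {p t : ℝ} (hp : p ∈ Ioo (0:ℝ) (1/2)) (ht : t ∈ Ioo (0:ℝ) (1/2)) :
    HasDerivAt (chi p)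
      ((((1 - 2*p) * ((-(1/(1 - (p + (1 - 2*p) * t))) - 1/(p + (1 - 2*p) * t)) * (1 - 2*p)))
          * Lf t
        - ((1 - 2*p) * Lf (p + (1 - 2*p) * t)) * (-(1/(1-t)) - 1/t)) / Lf t ^ 2) t := by
  obtain ⟨hg0, hg2⟩ := gmap hp ht.1 ht.2.le
  have hg1 : p + (1 - 2*p) * t < 1 := by linarith
  have hinner : HasDerivAt (fun s : ℝ => p + (1 - 2*p) * s) (1 - 2*p) t := by
    simpa using ((hasDerivAt_id t).const_mul (1 - 2*p)).const_add p
  have hLG : HasDerivAt (fun s : ℝ => Lf (p + (1 - 2*p) * s))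
      ((-(1/(1 - (p + (1 - 2*p) * t))) - 1/(p + (1 - 2*p) * t)) * (1 - 2*p)) t :=
    by have := (hasDerivAt_Lf hg0 hg1).comp t hinner; exact this
  have hnum := hLG.const_mul (1 - 2*p)
  have hLt := hasDerivAt_Lf ht.1 (by linarith [ht.2] : t < 1)
  have hLtne : Lf t ≠ 0 := (Lf_pos ht.1 ht.2).ne'
  exact hnum.div hLt hLtne

lemma chi_mono {p : ℝ} (hp : p ∈ Ioo (0:ℝ) (1/2)) :
    MonotoneOn (chi p) (Ioo (0:ℝ) (1/2)) := by
  have hint : interior (Ioo (0:ℝ) (1/2)) = Ioo (0:ℝ) (1/2) := isOpen_Ioo.interior_eq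
  apply monotoneOn_of_deriv_nonneg (convex_Ioo _ _)
  · intro t ht
    exact ((hasDerivAt_chi hp ht).continuousAt).continuousWithinAt
  · rw [hint]
    intro t ht
    exact ((hasDerivAt_chi hp ht).differentiableAt).differentiableWithinAt
  · rw [hint]
    intro t ht
    rw [(hasDerivAt_chi hp ht).deriv]
    obtain ⟨hg0, hg2⟩ := gmap hp ht.1 ht.2.le
    obtain ⟨hp0, hp2⟩ := hp
    have hkey := key_ineq ⟨hp0, hp2⟩ ht
    set G := p + (1 - 2*p) * t with hG
    have ht0 : 0 < t := ht.1
    have ht1 : 0 < 1 - t := by linarith [ht.2]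
    have hg1 : 0 < 1 - G := by linarith
    have hLt : 0 < Lf t := Lf_pos ht.1 ht.2
    have hD : (((1 - 2*p) * ((-(1/(1 - G)) - 1/G) * (1 - 2*p))) * Lf t
        - ((1 - 2*p) * Lf G) * (-(1/(1-t)) - 1/t)) / Lf t ^ 2
        = ((1 - 2*p) / (t * (1-t) * (G * (1-G)) * Lf t ^ 2))
            * (Ff G - (1 - 2*p) * Ff t) := by
      unfold Ff
      field_simp
      ring
    rw [hD]
    have hc : 0 ≤ (1 - 2*p) / (t * (1-t) * (G * (1-G)) * Lf t ^ 2) := by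
      apply div_nonneg (by linarith)
      have : 0 < t * (1-t) * (G * (1-G)) * Lf t ^ 2 := by positivity
      linarith
    exact mul_nonneg hc (by linarith)

/-! ### Derivative of `φ_p` -/

lemma bconv_eq (a q : ℝ) : bconv a q = q + (1 - 2*q) * a := by unfold bconv; ring

lemma hasDerivAt_phi {p : ℝ} (hp : p ∈ Ioo (0:ℝ) (1/2)) {x : ℝ} (hx : x ∈ Ioo (0:ℝ) 1) :
    HasDerivAt (fun x => h2 (p + (1 - 2*p) * h2inv x)) (chi p (h2inv x)) x := by
  have htI : h2inv x ∈ Ioo (0:ℝ) (1/2) := h2inv_mem_Ioo hx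
  obtain ⟨hg0, hg2⟩ := gmap hp htI.1 htI.2.le
  have hg1 : p + (1 - 2*p) * h2inv x < 1 := by linarith
  have hLt : 0 < Lf (h2inv x) := Lf_pos htI.1 htI.2
  have hinv : HasDerivAt h2inv ((Lf (h2inv x) / Real.log 2)⁻¹) x := hasDerivAt_h2inv hx
  have hlin : HasDerivAt (fun x : ℝ => p + (1 - 2*p) * h2inv x)
      ((1 - 2*p) * (Lf (h2inv x) / Real.log 2)⁻¹) x :=
    (hinv.const_mul (1 - 2*p)).const_add p
  have houter := (hasDerivAt_h2 hg0.ne' hg1.ne).comp x hlin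
  have hrfl : Real.log (1 - (p + (1 - 2*p) * h2inv x))
        - Real.log (p + (1 - 2*p) * h2inv x) = Lf (p + (1 - 2*p) * h2inv x) := rfl
  have heq : (Real.log (1 - (p + (1 - 2*p) * h2inv x))
        - Real.log (p + (1 - 2*p) * h2inv x)) / Real.log 2
        * ((1 - 2*p) * (Lf (h2inv x) / Real.log 2)⁻¹)
      = chi p (h2inv x) := by
    rw [hrfl]
    unfold chi
    rw [div_mul_eq_mul_div, div_eq_div_iff log2_pos.ne' hLt.ne']
    field_simp
  rw [heq] at houter
  exact houter

end Stmt17Aux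

open Stmt17Aux Set in

theorem stmt17 (p : ℝ) (hp : p ∈ Set.Ioo (0:ℝ) (1/2)) :
    ConvexOn ℝ (Set.Icc (0:ℝ) 1) (fun x => h2 (bconv (h2inv x) p)) ∧
      MonotoneOn (fun x => h2 (bconv (h2inv x) p)) (Set.Icc (0:ℝ) 1) := by
  have hφ : (fun x => h2 (bconv (h2inv x) p))
      = fun x => h2 (p + (1 - 2*p) * h2inv x) := by
    funext x; rw [bconv_eq]
  constructor
  · -- Convexity
    rw [hφ]
    refine MonotoneOn.convexOn_of_deriv (convex_Icc _ _) ?_ ?_ ?_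
    · -- continuity
      apply Stmt17Aux.continuous_h2.comp_continuousOn
      exact (continuousOn_const.add (continuousOn_const.mul continuousOn_h2inv))
    · rw [interior_Icc]
      intro x hx
      exact ((hasDerivAt_phi hp hx).differentiableAt).differentiableWithinAt
    · rw [interior_Icc]
      intro a ha b hb hab
      rw [(hasDerivAt_phi hp ha).deriv, (hasDerivAt_phi hp hb).deriv]
      exact chi_mono hp (h2inv_mem_Ioo ha) (h2inv_mem_Ioo hb)
        (h2inv_monotone (Ioo_subset_Icc_self ha) (Ioo_subset_Icc_self hb) hab)
  · -- Monotonicity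
    intro a ha b hb hab
    simp only
    rw [bconv_eq, bconv_eq]
    have hta := (h2inv_mem ha.1).1
    have htb := (h2inv_mem hb.1).1
    have htab : h2inv a ≤ h2inv b := h2inv_monotone ha hb hab
    have hga : p + (1 - 2*p) * h2inv a ∈ Icc (0:ℝ) (1/2) := by
      constructor <;> nlinarith [hta.1, hta.2, hp.1, hp.2]
    have hgb : p + (1 - 2*p) * h2inv b ∈ Icc (0:ℝ) (1/2) := by
      constructor <;> nlinarith [htb.1, htb.2, hp.1, hp.2]
    exact h2_strictMono.monotoneOn hga hgb (by nlinarith [hp.1, hp.2])
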